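/- Let g > 0 and let j ≥ 1 be an integer. If β_{j+1} < β < β_j, then there exist at least 2j pairwise distinct GP solutions on [0,L] with parameter β, none of which is identically zero. (Theorem 4.2(2): between consecutive quantum critical points β_{j+1} and β_j, the BEC system has at least 2j nontrivial quantum states.) -/

import Mathlib

open Set MeasureTheory intervalIntegral Filter Topology

/-- `φ` is a GP solution on `[a,b]` with parameter `β`:
`φ` is continuous on `[a,b]`, twice continuously differentiable on `(a,b)`,
satisfies `-(ℏ²/(4m))·φ'' + (β - ℏλ)·φ + g·φ³ = 0` on `(a,b)`,
and `φ a = φ b = 0`. -/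
def IsGPSolution (ℏ m lam g a b β : ℝ) (φ : ℝ → ℝ) : Prop :=
  ContinuousOn φ (Set.Icc a b) ∧
  ContDiffOn ℝ 2 φ (Set.Ioo a b) ∧
  (∀ x ∈ Set.Ioo a b,
    -(ℏ ^ 2 / (4 * m)) * deriv (deriv φ) x + (β - ℏ * lam) * φ x + g * (φ x) ^ 3 = 0) ∧
  φ a = 0 ∧ φ b = 0

/-- The quantum critical points `β_k = ℏλ - (ℏ²/(4m))·(kπ/L)²`. -/
noncomputable def betaCrit (ℏ m lam L : ℝ) (k : ℕ) : ℝ :=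
  ℏ * lam - (ℏ ^ 2 / (4 * m)) * ((k : ℝ) * Real.pi / L) ^ 2

set_option linter.unusedSectionVars false
set_option linter.unusedVariables false


noncomputable def gpH (c g μ A τ : ℝ) : ℝ :=
  Real.sqrt ((μ - g / 2 * A ^ 2 * (1 + Real.sin τ ^ 2)) / c)

noncomputable def gpG (c g μ A t : ℝ) : ℝ := ∫ τ in (0:ℝ)..t, (gpH c g μ A τ)⁻¹

section basic
variable {c g μ A : ℝ} (hc : 0 < c) (hg : 0 ≤ g) (hA : g * A ^ 2 < μ)
include hc hg hA

theorem gpU_pos (τ : ℝ) : 0 < (μ - g / 2 * A ^ 2 * (1 + Real.sin τ ^ 2)) / c := by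
  apply div_pos _ hc
  nlinarith [Real.sin_sq_le_one τ, mul_nonneg hg (sq_nonneg A), sq_nonneg (Real.sin τ)]

theorem gpH_pos (τ : ℝ) : 0 < gpH c g μ A τ :=
  Real.sqrt_pos.2 (gpU_pos hc hg hA τ)

theorem gpH_sq (τ : ℝ) :
    gpH c g μ A τ ^ 2 = (μ - g / 2 * A ^ 2 * (1 + Real.sin τ ^ 2)) / c :=
  Real.sq_sqrt (gpU_pos hc hg hA τ).le

theorem gpH_le (τ : ℝ) : gpH c g μ A τ ≤ Real.sqrt (μ / c) := by
  apply Real.sqrt_le_sqrt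
  gcongr
  nlinarith [sq_nonneg (Real.sin τ), mul_nonneg hg (sq_nonneg A)]

theorem gpHinv_ge (τ : ℝ) : (Real.sqrt (μ / c))⁻¹ ≤ (gpH c g μ A τ)⁻¹ :=
  inv_anti₀ (gpH_pos hc hg hA τ) (gpH_le hc hg hA τ)

omit hc hg hA in
theorem gpH_cont : Continuous (gpH c g μ A) := by
  unfold gpH; fun_prop

theorem gpHinv_cont : Continuous (fun τ => (gpH c g μ A τ)⁻¹) :=
  gpH_cont.inv₀ fun τ => (gpH_pos hc hg hA τ).ne'

theorem gpHinv_intInt (a b : ℝ) :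
    IntervalIntegrable (fun τ => (gpH c g μ A τ)⁻¹) volume a b :=
  (gpHinv_cont hc hg hA).intervalIntegrable a b

theorem gpG_hasDerivAt (t : ℝ) :
    HasDerivAt (gpG c g μ A) (gpH c g μ A t)⁻¹ t :=
  intervalIntegral.integral_hasDerivAt_right (gpHinv_intInt hc hg hA 0 t)
    ((gpHinv_cont hc hg hA).aestronglyMeasurable.stronglyMeasurableAtFilter)
    (gpHinv_cont hc hg hA).continuousAt

theorem gpG_strictMono : StrictMono (gpG c g μ A) := by
  apply strictMono_of_deriv_pos
  intro t
  rw [(gpG_hasDerivAt hc hg hA t).deriv]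
  exact inv_pos.2 (gpH_pos hc hg hA t)

theorem gpG_cont : Continuous (gpG c g μ A) :=
  continuous_iff_continuousAt.2 fun t => (gpG_hasDerivAt hc hg hA t).continuousAt

theorem gpG_zero : gpG c g μ A 0 = 0 := intervalIntegral.integral_same

theorem gpG_lower {t : ℝ} (ht : 0 ≤ t) :
    t * (Real.sqrt (μ / c))⁻¹ ≤ gpG c g μ A t := by
  have h1 : IntervalIntegrable (fun _ : ℝ => (Real.sqrt (μ / c))⁻¹) volume 0 t :=
    continuous_const.intervalIntegrable 0 t
  have := intervalIntegral.integral_mono_on ht h1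
    (gpHinv_intInt hc hg hA 0 t) (fun τ _ => gpHinv_ge hc hg hA τ)
  simpa [gpG, intervalIntegral.integral_const, smul_eq_mul, mul_comm] using this

theorem gpG_upper {t : ℝ} (ht : t ≤ 0) :
    gpG c g μ A t ≤ t * (Real.sqrt (μ / c))⁻¹ := by
  have h0 : gpG c g μ A t = -∫ τ in t..(0:ℝ), (gpH c g μ A τ)⁻¹ := by
    rw [gpG, intervalIntegral.integral_symm]
  have h1 : IntervalIntegrable (fun _ : ℝ => (Real.sqrt (μ / c))⁻¹) volume t 0 :=
    continuous_const.intervalIntegrable t 0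
  have h2 := intervalIntegral.integral_mono_on ht h1
    (gpHinv_intInt hc hg hA t 0) (fun τ _ => gpHinv_ge hc hg hA τ)
  rw [intervalIntegral.integral_const, smul_eq_mul] at h2
  rw [h0]
  nlinarith [h2]

theorem gpG_surjective : Function.Surjective (gpG c g μ A) := by
  intro y
  have hμpos : 0 < μ := lt_of_le_of_lt (mul_nonneg hg (sq_nonneg A)) hA
  have hMpos : 0 < Real.sqrt (μ / c) := Real.sqrt_pos.2 (div_pos hμpos hc)
  set M : ℝ := Real.sqrt (μ / c) with hM
  set t₀ : ℝ := M * |y| + M with ht₀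
  have ht₀pos : 0 < t₀ := by positivity
  have h1 : y ≤ gpG c g μ A t₀ := by
    have h := gpG_lower hc hg hA ht₀pos.le
    have e : t₀ * M⁻¹ = |y| + 1 := by rw [ht₀]; field_simp
    rw [e] at h
    linarith [le_abs_self y]
  have h2 : gpG c g μ A (-t₀) ≤ y := by
    have h := gpG_upper hc hg hA (neg_nonpos_of_nonneg ht₀pos.le)
    have e : -t₀ * M⁻¹ = -(|y| + 1) := by rw [ht₀]; field_simp
    rw [e] at h
    linarith [neg_abs_le y]
  obtain ⟨t, _, htv⟩ := intermediate_value_Icc (by linarith : -t₀ ≤ t₀)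
    ((gpG_cont hc hg hA).continuousOn) ⟨h2, h1⟩
  exact ⟨t, htv⟩

omit hc hg hA in
theorem gpHinv_periodic : Function.Periodic (fun τ => (gpH c g μ A τ)⁻¹) Real.pi := by
  intro τ
  simp [gpH, Real.sin_add_pi, neg_sq]

theorem gpG_add_pi (t : ℝ) :
    gpG c g μ A (t + Real.pi) = gpG c g μ A t + gpG c g μ A Real.pi := by
  have := (gpHinv_periodic (c := c) (g := g) (μ := μ) (A := A)).intervalIntegral_add_eq_add 0 t
    (fun a b => gpHinv_intInt hc hg hA a b)
  rw [zero_add] at this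
  exact this

theorem gpG_nat_mul (n : ℕ) :
    gpG c g μ A (n * Real.pi) = n * gpG c g μ A Real.pi := by
  induction n with
  | zero => simpa using gpG_zero hc hg hA
  | succ k ih =>
      have e : ((k:ℝ) + 1) * Real.pi = k * Real.pi + Real.pi := by ring
      rw [Nat.cast_succ, e, gpG_add_pi hc hg hA, ih]; ring

end basic

theorem gp_core {c g μ A L : ℝ} {n : ℕ} (hc : 0 < c) (hg : 0 ≤ g) (hApos : 0 < A)
    (hA : g * A ^ 2 < μ) (hn : 1 ≤ n) (hL : 0 < L)
    (hGπ : gpG c g μ A Real.pi = L / n) :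
    ∃ ψ : ℝ → ℝ,
      ContDiff ℝ 2 ψ ∧
      (∀ x, c * deriv (deriv ψ) x = -(μ * ψ x) + g * ψ x ^ 3) ∧
      ψ 0 = 0 ∧ ψ L = 0 ∧ ψ (L / n) = 0 ∧
      (∃ x0 ∈ Set.Icc (0:ℝ) L, ψ x0 = A) ∧
      (∀ x, 0 < x → x < L / n → 0 < ψ x) := by
  have hμpos : 0 < μ := lt_of_le_of_lt (mul_nonneg hg (sq_nonneg A)) hA
  set e := StrictMono.orderIsoOfSurjective (gpG c g μ A) (gpG_strictMono hc hg hA)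
    (gpG_surjective hc hg hA) with he
  set θ : ℝ → ℝ := fun x => e.symm x with hθdef
  have hGθ : ∀ x, gpG c g μ A (θ x) = x := fun x =>
    StrictMono.orderIsoOfSurjective_self_symm_apply _ _ _ x
  have hθG : ∀ t, θ (gpG c g μ A t) = t := fun t =>
    StrictMono.orderIsoOfSurjective_symm_apply_self _ _ _ t
  have hθcont : Continuous θ := e.symm.continuous
  have hθmono : StrictMono θ := e.symm.strictMono
  have hθd : ∀ x, HasDerivAt θ (gpH c g μ A (θ x)) x := by
    intro x
    have h := HasDerivAt.of_local_left_inverse (hθcont.continuousAt (x := x))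
      (gpG_hasDerivAt hc hg hA (θ x)) (inv_ne_zero (gpH_pos hc hg hA (θ x)).ne')
      (Filter.Eventually.of_forall hGθ)
    rwa [inv_inv] at h
  have hθdiff : Differentiable ℝ θ := fun x => (hθd x).differentiableAt
  have hderivθ : deriv θ = fun x => gpH c g μ A (θ x) := funext fun x => (hθd x).deriv
  -- smoothness of gpH
  have hsin2 : ContDiff ℝ 2 Real.sin := Real.contDiff_sin.of_le le_top
  have hWsm : ContDiff ℝ 2 (fun τ : ℝ => (μ - g / 2 * A ^ 2 * (1 + Real.sin τ ^ 2)) / c) :=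
    (contDiff_const.sub (contDiff_const.mul (contDiff_const.add (hsin2.pow 2)))).div_const c
  have hHsm : ContDiff ℝ 2 (gpH c g μ A) := by
    rw [contDiff_iff_contDiffAt]
    intro τ
    exact (Real.contDiffAt_sqrt (gpU_pos hc hg hA τ).ne').comp τ hWsm.contDiffAt
  have hθ1 : ContDiff ℝ 1 θ := by
    rw [contDiff_one_iff_deriv, hderivθ]
    exact ⟨hθdiff, gpH_cont.comp hθcont⟩
  have hθ2 : ContDiff ℝ 2 θ := by
    have h21 : (2 : WithTop ℕ∞) = 1 + 1 := by norm_num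
    rw [h21, contDiff_succ_iff_deriv, hderivθ]
    refine ⟨hθdiff, by simp, ?_⟩
    exact hHsm.of_le (by norm_num) |>.comp hθ1
  set ψ : ℝ → ℝ := fun x => A * Real.sin (θ x) with hψdef
  have hψsm : ContDiff ℝ 2 ψ := contDiff_const.mul ((Real.contDiff_sin.of_le le_top).comp hθ2)
  -- first derivative
  have hψ' : ∀ x, HasDerivAt ψ (A * (Real.cos (θ x) * gpH c g μ A (θ x))) x := fun x =>
    ((Real.hasDerivAt_sin (θ x)).comp x (hθd x)).const_mul A
  have hderivψ : deriv ψ = fun x => A * (Real.cos (θ x) * gpH c g μ A (θ x)) :=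
    funext fun x => (hψ' x).deriv
  -- derivative of W and gpH
  have hW : ∀ τ : ℝ, HasDerivAt (fun τ : ℝ => (μ - g / 2 * A ^ 2 * (1 + Real.sin τ ^ 2)) / c)
      (-(g / 2 * A ^ 2 * (2 * Real.sin τ * Real.cos τ)) / c) τ := by
    intro τ
    have h1 : HasDerivAt (fun τ : ℝ => Real.sin τ ^ 2) (2 * Real.sin τ * Real.cos τ) τ := by
      simpa using (Real.hasDerivAt_sin τ).fun_pow 2
    exact (((h1.const_add 1).const_mul (g / 2 * A ^ 2)).const_sub μ).div_const c
  have hHd : ∀ τ : ℝ, HasDerivAt (gpH c g μ A)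
      (1 / (2 * gpH c g μ A τ) * (-(g / 2 * A ^ 2 * (2 * Real.sin τ * Real.cos τ)) / c)) τ := by
    intro τ
    exact (Real.hasDerivAt_sqrt (gpU_pos hc hg hA τ).ne').comp τ (hW τ)
  -- second derivative
  have hψ'' : ∀ x, deriv (deriv ψ) x =
      A * ((-Real.sin (θ x) * gpH c g μ A (θ x)) * gpH c g μ A (θ x) +
        Real.cos (θ x) * ((1 / (2 * gpH c g μ A (θ x)) *
          (-(g / 2 * A ^ 2 * (2 * Real.sin (θ x) * Real.cos (θ x))) / c)) * gpH c g μ A (θ x))) := by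
    intro x
    rw [hderivψ]
    refine HasDerivAt.deriv ?_
    exact (((Real.hasDerivAt_cos (θ x)).comp x (hθd x)).mul ((hHd (θ x)).comp x (hθd x))).const_mul A
  -- the ODE
  have hODE : ∀ x, c * deriv (deriv ψ) x = -(μ * ψ x) + g * ψ x ^ 3 := by
    intro x
    rw [hψ'' x]
    have hHpos := gpH_pos hc hg hA (θ x)
    have hH2 := gpH_sq hc hg hA (θ x)
    have hpy := Real.sin_sq_add_cos_sq (θ x)
    set s := Real.sin (θ x)
    set co := Real.cos (θ x)
    set H := gpH c g μ A (θ x)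
    have hψx : ψ x = A * s := rfl
    have hHne : H ≠ 0 := hHpos.ne'
    have e1 : 1 / (2 * H) * (-(g / 2 * A ^ 2 * (2 * s * co)) / c) * H
        = -(g / 2 * A ^ 2 * (s * co)) / c := by
      field_simp
    have e2 : -s * H * H = -s * ((μ - g / 2 * A ^ 2 * (1 + s ^ 2)) / c) := by
      rw [show -s * H * H = -s * H ^ 2 by ring, hH2]
    rw [hψx, e1, e2]
    have hcne : c ≠ 0 := hc.ne'
    field_simp
    linear_combination (-(s * A ^ 2 * g)) * hpy
  -- boundary values
  have hθ0 : θ 0 = 0 := by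
    have := hθG 0
    rwa [gpG_zero hc hg hA] at this
  have hψ0 : ψ 0 = 0 := by simp [hψdef, hθ0]
  have hnR : (0:ℝ) < n := by exact_mod_cast Nat.lt_of_lt_of_le Nat.zero_lt_one hn
  have hGnπ : gpG c g μ A (n * Real.pi) = L := by
    rw [gpG_nat_mul hc hg hA n, hGπ]
    field_simp
  have hθL : θ L = n * Real.pi := by rw [← hGnπ, hθG]
  have hψL : ψ L = 0 := by
    simp [hψdef, hθL, Real.sin_nat_mul_pi]
  have hθLn : θ (L / n) = Real.pi := by rw [← hGπ, hθG]
  have hψLn : ψ (L / n) = 0 := by simp [hψdef, hθLn]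
  have hLn_le : L / n ≤ L := by
    apply div_le_self hL.le
    exact_mod_cast hn
  -- witness point
  have hmonoG : Monotone (gpG c g μ A) := (gpG_strictMono hc hg hA).monotone
  have hx0mem : gpG c g μ A (Real.pi / 2) ∈ Set.Icc (0:ℝ) L := by
    constructor
    · rw [← gpG_zero hc hg hA (A := A)]
      exact hmonoG (by positivity)
    · calc gpG c g μ A (Real.pi / 2) ≤ gpG c g μ A Real.pi :=
            hmonoG (by linarith [Real.pi_pos])
        _ = L / n := hGπ
        _ ≤ L := hLn_le
  have hψx0 : ψ (gpG c g μ A (Real.pi / 2)) = A := by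
    simp [hψdef, hθG]
  -- positivity
  have hpos : ∀ x, 0 < x → x < L / n → 0 < ψ x := by
    intro x hx1 hx2
    have h1 : (0:ℝ) < θ x := by
      have := hθmono (show (0:ℝ) < x from hx1)
      rwa [hθ0] at this
    have h2 : θ x < Real.pi := by
      have := hθmono (show x < L / n from hx2)
      rwa [hθLn] at this
    exact mul_pos hApos (Real.sin_pos_of_pos_of_lt_pi h1 h2)
  exact ⟨ψ, hψsm, hODE, hψ0, hψL, hψLn, ⟨_, hx0mem, hψx0⟩, hpos⟩

theorem gpG_zero_amp {c g μ : ℝ} :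
    gpG c g μ 0 Real.pi = Real.pi * (Real.sqrt (μ / c))⁻¹ := by
  have h : (fun τ : ℝ => (gpH c g μ 0 τ)⁻¹) = fun _ : ℝ => (Real.sqrt (μ / c))⁻¹ := by
    funext τ; simp [gpH]
  rw [gpG, h, intervalIntegral.integral_const]
  simp [mul_comm]

set_option maxHeartbeats 2000000 in
theorem gpG_large {c g μ R : ℝ} (hc : 0 < c) (hg : 0 < g) (hμ : 0 < μ) (hR : 0 < R) :
    ∃ A₁ : ℝ, 0 ≤ A₁ ∧ g * A₁ ^ 2 < μ ∧ R ≤ gpG c g μ A₁ Real.pi := by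
  have hπ := Real.pi_pos
  set C₀ : ℝ := Real.sqrt c / Real.sqrt (μ / 2) with hC₀
  have hC₀pos : 0 < C₀ := by positivity
  set d₀ : ℝ := Real.sqrt (μ / 4) * (Real.pi / 4) with hd₀
  have hd₀pos : 0 < d₀ := by positivity
  set ε : ℝ := min (μ / 2) ((d₀ * Real.exp (-(R / C₀))) ^ 2) with hε
  have hεpos : 0 < ε := lt_min (by positivity) (by positivity)
  have hεμ : ε ≤ μ / 2 := min_le_left _ _
  have hsqε : Real.sqrt ε ≤ d₀ * Real.exp (-(R / C₀)) := by
    calc Real.sqrt ε ≤ Real.sqrt ((d₀ * Real.exp (-(R / C₀))) ^ 2) :=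
          Real.sqrt_le_sqrt (min_le_right _ _)
      _ = d₀ * Real.exp (-(R / C₀)) := Real.sqrt_sq (by positivity)
  set A₁ : ℝ := Real.sqrt ((μ - ε) / g) with hA₁def
  have hμε : 0 < μ - ε := by linarith
  have hA₁nn : 0 ≤ A₁ := Real.sqrt_nonneg _
  have hgA₁ : g * A₁ ^ 2 = μ - ε := by
    rw [hA₁def, Real.sq_sqrt (by positivity)]
    field_simp
  have hA₁lt : g * A₁ ^ 2 < μ := by rw [hgA₁]; linarith
  refine ⟨A₁, hA₁nn, hA₁lt, ?_⟩
  set K : ℝ := g / 2 * A₁ ^ 2 with hK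
  have hKval : K = (μ - ε) / 2 := by rw [hK]; linarith [hgA₁]
  have hKpos : 0 < K := by rw [hKval]; linarith
  have hK4 : μ / 4 ≤ K := by rw [hKval]; linarith
  have hK2 : K ≤ μ / 2 := by rw [hKval]; linarith
  have hsεpos : 0 < Real.sqrt ε := Real.sqrt_pos.2 hεpos
  have hsKpos : 0 < Real.sqrt K := Real.sqrt_pos.2 hKpos
  -- the lower-bound integrand and its antiderivative
  set S : ℝ → ℝ := fun τ => Real.sqrt ε + Real.sqrt K * (Real.pi / 2 - τ) with hSdef
  have hSpos : ∀ τ ∈ Set.Icc (Real.pi / 4) (Real.pi / 2), 0 < S τ := by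
    intro τ hτ
    have h1 : (0:ℝ) ≤ Real.pi / 2 - τ := by linarith [hτ.2]
    have := mul_nonneg hsKpos.le h1
    simp only [hSdef]; linarith
  -- pointwise comparison
  have hpt : ∀ τ ∈ Set.Icc (Real.pi / 4) (Real.pi / 2),
      Real.sqrt c / S τ ≤ (gpH c g μ A₁ τ)⁻¹ := by
    intro τ hτ
    have hτ2 : (0:ℝ) ≤ Real.pi / 2 - τ := by linarith [hτ.2]
    have hcos0 : 0 ≤ Real.cos τ := Real.cos_nonneg_of_mem_Icc ⟨by linarith [hτ.1], hτ.2⟩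
    have hcosle : Real.cos τ ≤ Real.pi / 2 - τ := by
      have := Real.sin_le hτ2
      rwa [Real.sin_pi_div_two_sub] at this
    have harg : (μ - g / 2 * A₁ ^ 2 * (1 + Real.sin τ ^ 2)) = ε + K * Real.cos τ ^ 2 := by
      have hsc := Real.sin_sq_add_cos_sq τ
      rw [← hK]
      nlinarith [hgA₁]
    have hSτ := hSpos τ hτ
    have hHle : gpH c g μ A₁ τ ≤ S τ / Real.sqrt c := by
      rw [gpH, harg]
      have e1 : Real.sqrt ε ^ 2 = ε := Real.sq_sqrt hεpos.le
      have e2 : Real.sqrt K ^ 2 = K := Real.sq_sqrt hKpos.le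
      have h2 : K * Real.cos τ ^ 2 ≤ K * (Real.pi / 2 - τ) ^ 2 :=
        mul_le_mul_of_nonneg_left (by nlinarith) hKpos.le
      have h1 : ε + K * Real.cos τ ^ 2 ≤ S τ ^ 2 := by
        simp only [hSdef]
        nlinarith [mul_nonneg hsεpos.le (mul_nonneg hsKpos.le hτ2)]
      calc Real.sqrt ((ε + K * Real.cos τ ^ 2) / c)
          = Real.sqrt (ε + K * Real.cos τ ^ 2) / Real.sqrt c :=
            Real.sqrt_div (by positivity) c
        _ ≤ Real.sqrt (S τ ^ 2) / Real.sqrt c := by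
            gcongr
        _ = S τ / Real.sqrt c := by rw [Real.sqrt_sq hSτ.le]
    have hHpos : 0 < gpH c g μ A₁ τ := gpH_pos hc hg.le hA₁lt τ
    have := inv_anti₀ hHpos hHle
    rwa [inv_div] at this
  -- the log integral
  set Φ : ℝ → ℝ := fun τ => -(Real.sqrt c / Real.sqrt K) * Real.log (S τ) with hΦdef
  have hΦd : ∀ τ ∈ Set.uIcc (Real.pi / 4) (Real.pi / 2),
      HasDerivAt Φ (Real.sqrt c / S τ) τ := by
    intro τ hτ
    rw [Set.uIcc_of_le (by linarith)] at hτ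
    have hSτ := hSpos τ hτ
    have hS : HasDerivAt S (-Real.sqrt K) τ := by
      have : HasDerivAt (fun τ : ℝ => Real.pi / 2 - τ) (-1) τ := by
        simpa using (hasDerivAt_id τ).const_sub (Real.pi / 2)
      have h := (this.const_mul (Real.sqrt K)).const_add (Real.sqrt ε)
      simp only [mul_neg, mul_one] at h
      exact h
    have hlog : HasDerivAt (fun τ => Real.log (S τ)) ((S τ)⁻¹ * (-Real.sqrt K)) τ :=
      (Real.hasDerivAt_log hSτ.ne').comp τ hS
    have h2 := hlog.const_mul (-(Real.sqrt c / Real.sqrt K))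
    have e : -(Real.sqrt c / Real.sqrt K) * ((S τ)⁻¹ * -Real.sqrt K) = Real.sqrt c / S τ := by
      field_simp
    rwa [e] at h2
  have hint : ∫ τ in (Real.pi / 4)..(Real.pi / 2), Real.sqrt c / S τ
      = Φ (Real.pi / 2) - Φ (Real.pi / 4) := by
    apply intervalIntegral.integral_eq_sub_of_hasDerivAt hΦd
    apply ContinuousOn.intervalIntegrable
    apply ContinuousOn.div continuousOn_const
    · fun_prop
    · intro τ hτ
      rw [Set.uIcc_of_le (by linarith)] at hτ
      exact (hSpos τ hτ).ne'
  -- value of the log integral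
  have hval : Φ (Real.pi / 2) - Φ (Real.pi / 4)
      = (Real.sqrt c / Real.sqrt K) * (Real.log (S (Real.pi / 4)) - Real.log (Real.sqrt ε)) := by
    have e1 : S (Real.pi / 2) = Real.sqrt ε := by simp [hSdef]
    rw [hΦdef]
    simp only [e1]
    ring
  -- lower bound of the log value
  have hlog_ge : R ≤ (Real.sqrt c / Real.sqrt K) * (Real.log (S (Real.pi / 4)) - Real.log (Real.sqrt ε)) := by
    have hS4 : d₀ ≤ S (Real.pi / 4) := by
      have : Real.sqrt (μ / 4) ≤ Real.sqrt K := Real.sqrt_le_sqrt hK4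
      have h0 : Real.sqrt K * (Real.pi / 2 - Real.pi / 4) = Real.sqrt K * (Real.pi / 4) := by
        ring_nf
      simp only [hSdef, hd₀]
      nlinarith [hsεpos]
    have hratio : Real.exp (R / C₀) ≤ S (Real.pi / 4) / Real.sqrt ε := by
      rw [le_div_iff₀ hsεpos]
      calc Real.exp (R / C₀) * Real.sqrt ε ≤ Real.exp (R / C₀) * (d₀ * Real.exp (-(R / C₀))) := by
            apply mul_le_mul_of_nonneg_left hsqε (Real.exp_nonneg _)
        _ = d₀ := by rw [mul_left_comm, ← Real.exp_add]; simp
        _ ≤ S (Real.pi / 4) := hS4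
    have hlogdiff : R / C₀ ≤ Real.log (S (Real.pi / 4)) - Real.log (Real.sqrt ε) := by
      have h1 : Real.log (Real.exp (R / C₀)) ≤ Real.log (S (Real.pi / 4) / Real.sqrt ε) :=
        Real.log_le_log (Real.exp_pos _) hratio
      rwa [Real.log_exp, Real.log_div (hSpos (Real.pi / 4) ⟨le_refl _, by linarith⟩).ne' hsεpos.ne'] at h1
    have hC₀le : C₀ ≤ Real.sqrt c / Real.sqrt K := by
      have h9 : (Real.sqrt (μ / 2))⁻¹ ≤ (Real.sqrt K)⁻¹ :=
        inv_anti₀ (Real.sqrt_pos.2 hKpos) (Real.sqrt_le_sqrt hK2)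
      calc C₀ = Real.sqrt c * (Real.sqrt (μ / 2))⁻¹ := by rw [hC₀, div_eq_mul_inv]
        _ ≤ Real.sqrt c * (Real.sqrt K)⁻¹ :=
            mul_le_mul_of_nonneg_left h9 (Real.sqrt_nonneg c)
        _ = Real.sqrt c / Real.sqrt K := (div_eq_mul_inv _ _).symm
    have hdiff_nn : 0 ≤ Real.log (S (Real.pi / 4)) - Real.log (Real.sqrt ε) := by
      have := div_nonneg hR.le hC₀pos.le
      linarith
    calc R = C₀ * (R / C₀) := by field_simp
      _ ≤ (Real.sqrt c / Real.sqrt K) * (Real.log (S (Real.pi / 4)) - Real.log (Real.sqrt ε)) :=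
          mul_le_mul hC₀le hlogdiff (div_nonneg hR.le hC₀pos.le) (by positivity)
  -- assemble: gpG ≥ middle integral ≥ log value ≥ R
  have hmid : ∫ τ in (Real.pi / 4)..(Real.pi / 2), Real.sqrt c / S τ
      ≤ ∫ τ in (Real.pi / 4)..(Real.pi / 2), (gpH c g μ A₁ τ)⁻¹ := by
    apply intervalIntegral.integral_mono_on (by linarith)
    · apply ContinuousOn.intervalIntegrable
      apply ContinuousOn.div continuousOn_const
      · fun_prop
      · intro τ hτ
        rw [Set.uIcc_of_le (by linarith)] at hτ
        exact (hSpos τ hτ).ne'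
    · exact gpHinv_intInt hc hg.le hA₁lt _ _
    · exact hpt
  have hsplit : gpG c g μ A₁ Real.pi
      = (∫ τ in (0:ℝ)..(Real.pi / 4), (gpH c g μ A₁ τ)⁻¹)
        + (∫ τ in (Real.pi / 4)..(Real.pi / 2), (gpH c g μ A₁ τ)⁻¹)
        + (∫ τ in (Real.pi / 2)..Real.pi, (gpH c g μ A₁ τ)⁻¹) := by
    have e1 := intervalIntegral.integral_add_adjacent_intervals
      (gpHinv_intInt hc hg.le hA₁lt 0 (Real.pi / 4))
      (gpHinv_intInt hc hg.le hA₁lt (Real.pi / 4) (Real.pi / 2))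
    have e2 := intervalIntegral.integral_add_adjacent_intervals
      (gpHinv_intInt hc hg.le hA₁lt 0 (Real.pi / 2))
      (gpHinv_intInt hc hg.le hA₁lt (Real.pi / 2) Real.pi)
    rw [gpG, ← e2, ← e1]
  have hnn1 : 0 ≤ ∫ τ in (0:ℝ)..(Real.pi / 4), (gpH c g μ A₁ τ)⁻¹ :=
    intervalIntegral.integral_nonneg (by linarith)
      (fun τ _ => (inv_pos.2 (gpH_pos hc hg.le hA₁lt τ)).le)
  have hnn3 : 0 ≤ ∫ τ in (Real.pi / 2)..Real.pi, (gpH c g μ A₁ τ)⁻¹ :=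
    intervalIntegral.integral_nonneg (by linarith)
      (fun τ _ => (inv_pos.2 (gpH_pos hc hg.le hA₁lt τ)).le)
  calc R ≤ (Real.sqrt c / Real.sqrt K) * (Real.log (S (Real.pi / 4)) - Real.log (Real.sqrt ε)) :=
        hlog_ge
    _ = ∫ τ in (Real.pi / 4)..(Real.pi / 2), Real.sqrt c / S τ := by rw [hint, hval]
    _ ≤ ∫ τ in (Real.pi / 4)..(Real.pi / 2), (gpH c g μ A₁ τ)⁻¹ := hmid
    _ ≤ gpG c g μ A₁ Real.pi := by rw [hsplit]; linarith

theorem gp_amp {c g μ L : ℝ} {n : ℕ} (hc : 0 < c) (hg : 0 < g) (hL : 0 < L) (hn : 1 ≤ n)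
    (hcond : c * ((n : ℝ) * Real.pi / L) ^ 2 < μ) :
    ∃ A : ℝ, 0 < A ∧ g * A ^ 2 < μ ∧ gpG c g μ A Real.pi = L / n := by
  have hπ := Real.pi_pos
  have hnR : (0:ℝ) < n := by exact_mod_cast Nat.lt_of_lt_of_le Nat.zero_lt_one hn
  have hμ : 0 < μ := lt_of_le_of_lt (by positivity) hcond
  have hR : 0 < L / n := by positivity
  obtain ⟨A₁, hA₁nn, hA₁lt, hA₁ge⟩ := gpG_large hc hg hμ hR
  -- continuity of the amplitude-to-halfperiod map
  have hbound : ∀ a : ℝ, a ∈ Set.Icc (0:ℝ) A₁ → g * a ^ 2 < μ := by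
    intro a ha
    have h1 : a ^ 2 ≤ A₁ ^ 2 := pow_le_pow_left₀ ha.1 ha.2 2
    calc g * a ^ 2 ≤ g * A₁ ^ 2 := mul_le_mul_of_nonneg_left h1 hg.le
      _ < μ := hA₁lt
  have hcont : ContinuousOn (fun a => gpG c g μ a Real.pi) (Set.Icc 0 A₁) := by
    rw [continuousOn_iff_continuous_restrict]
    have hnum : Continuous fun p : (Set.Icc (0:ℝ) A₁) × ℝ =>
        (μ - g / 2 * (p.1 : ℝ) ^ 2 * (1 + Real.sin p.2 ^ 2)) / c := by
      fun_prop
    have huncurry : Continuous (Function.uncurry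
        (fun (a : Set.Icc (0:ℝ) A₁) (τ : ℝ) => (gpH c g μ (a : ℝ) τ)⁻¹)) := by
      apply Continuous.inv₀
      · exact Real.continuous_sqrt.comp hnum
      · rintro ⟨a, τ⟩
        exact (gpH_pos hc hg.le (hbound a a.2) τ).ne'
    exact intervalIntegral.continuous_parametric_intervalIntegral_of_continuous'
      (μ := volume) huncurry 0 Real.pi
  -- value at 0 is below the target
  have hF0 : gpG c g μ 0 Real.pi < L / n := by
    rw [gpG_zero_amp]
    have hx : (0:ℝ) ≤ (n : ℝ) * Real.pi / L := by positivity
    have h1 : (n : ℝ) * Real.pi / L < Real.sqrt (μ / c) := by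
      rw [Real.lt_sqrt hx]
      rw [lt_div_iff₀ hc]
      nlinarith [hcond]
    have h2 : (Real.sqrt (μ / c))⁻¹ < ((n : ℝ) * Real.pi / L)⁻¹ := by
      apply inv_strictAnti₀ (by positivity) h1
    calc Real.pi * (Real.sqrt (μ / c))⁻¹ < Real.pi * ((n : ℝ) * Real.pi / L)⁻¹ :=
          mul_lt_mul_of_pos_left h2 hπ
      _ = L / n := by field_simp
  -- IVT
  have hmem : L / n ∈ Set.Ioc (gpG c g μ 0 Real.pi) (gpG c g μ A₁ Real.pi) := ⟨hF0, hA₁ge⟩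
  obtain ⟨A, hAIoc, hAeq⟩ := intermediate_value_Ioc hA₁nn hcont hmem
  refine ⟨A, hAIoc.1, hbound A ⟨hAIoc.1.le, hAIoc.2⟩, hAeq⟩

theorem gp_isGP (ℏ m lam g β L : ℝ) (ψ : ℝ → ℝ) (s : ℝ) (hs : s = 1 ∨ s = -1)
    (hsm : ContDiff ℝ 2 ψ)
    (hODE : ∀ x, (ℏ ^ 2 / (4 * m)) * deriv (deriv ψ) x
      = -((ℏ * lam - β) * ψ x) + g * ψ x ^ 3)
    (h0 : ψ 0 = 0) (hLv : ψ L = 0) :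
    IsGPSolution ℏ m lam g 0 L β (fun x => s * ψ x) := by
  have e1 : deriv (fun x => s * ψ x) = fun x => s * deriv ψ x :=
    funext fun y => deriv_const_mul_field s
  have e2 : ∀ x, deriv (deriv (fun x => s * ψ x)) x = s * deriv (deriv ψ) x := by
    intro x
    rw [e1]
    exact deriv_const_mul_field s
  refine ⟨(continuous_const.mul hsm.continuous).continuousOn,
    (contDiff_const.mul hsm).contDiffOn, ?_, by simp [h0], by simp [hLv]⟩
  intro x _
  rw [e2]
  rcases hs with rfl | rfl
  · linear_combination (-1 : ℝ) * hODE x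
  · linear_combination hODE x


/-- Theorem 4.2(2): between consecutive quantum critical points
`β_{j+1}` and `β_j`, the BEC system has at least `2j` nontrivial quantum states. -/
theorem stmt_11 (ℏ m lam L g : ℝ) (hℏ : 0 < ℏ) (hm : 0 < m) (hL : 0 < L)
    (hg : 0 < g) (j : ℕ) (hj : 1 ≤ j) (β : ℝ)
    (hβ₁ : betaCrit ℏ m lam L (j + 1) < β) (hβ₂ : β < betaCrit ℏ m lam L j) :
    ∃ φ : Fin (2 * j) → ℝ → ℝ,
      (∀ i, IsGPSolution ℏ m lam g 0 L β (φ i)) ∧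
      (∀ i, ∃ x ∈ Set.Icc (0:ℝ) L, φ i x ≠ 0) ∧
      (∀ i i', i ≠ i' → ∃ x ∈ Set.Icc (0:ℝ) L, φ i x ≠ φ i' x) := by

  have hπ := Real.pi_pos
  set c : ℝ := ℏ ^ 2 / (4 * m) with hcdef
  have hc : 0 < c := by positivity
  set μ : ℝ := ℏ * lam - β with hμdef
  have hμj : c * ((j : ℝ) * Real.pi / L) ^ 2 < μ := by
    rw [betaCrit] at hβ₂
    simp only [hμdef, hcdef]
    linarith
  have hcond : ∀ k : Fin j, c * (((k.1 + 1 : ℕ) : ℝ) * Real.pi / L) ^ 2 < μ := by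
    intro k
    refine lt_of_le_of_lt ?_ hμj
    have h1 : ((k.1 + 1 : ℕ) : ℝ) ≤ (j : ℝ) := by exact_mod_cast k.2
    have h2 : (0:ℝ) ≤ ((k.1 + 1 : ℕ) : ℝ) * Real.pi / L := by positivity
    have h3 : ((k.1 + 1 : ℕ) : ℝ) * Real.pi / L ≤ (j : ℝ) * Real.pi / L := by
      gcongr
    have h4 : (((k.1 + 1 : ℕ) : ℝ) * Real.pi / L) ^ 2 ≤ ((j : ℝ) * Real.pi / L) ^ 2 := by
      nlinarith [h2, h3]
    exact mul_le_mul_of_nonneg_left h4 hc.le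
  have key : ∀ k : Fin j, ∃ ψ : ℝ → ℝ, ∃ A : ℝ, 0 < A ∧
      ContDiff ℝ 2 ψ ∧
      (∀ x, c * deriv (deriv ψ) x = -(μ * ψ x) + g * ψ x ^ 3) ∧
      ψ 0 = 0 ∧ ψ L = 0 ∧ ψ (L / ((k.1 + 1 : ℕ) : ℝ)) = 0 ∧
      (∃ x0 ∈ Set.Icc (0:ℝ) L, ψ x0 = A) ∧
      (∀ x, 0 < x → x < L / ((k.1 + 1 : ℕ) : ℝ) → 0 < ψ x) := by
    intro k
    obtain ⟨A, hApos, hAlt, hGπ⟩ := gp_amp (n := k.1 + 1) hc hg hL (Nat.le_add_left 1 k.1)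
      (hcond k)
    obtain ⟨ψ, h1, h2, h3, h4, h5, h6, h7⟩ :=
      gp_core hc hg.le hApos hAlt (Nat.le_add_left 1 k.1) hL hGπ
    refine ⟨ψ, A, hApos, h1, ?_, h3, h4, h5, h6, h7⟩
    intro x
    have := h2 x
    linarith [this]
  choose ψ A hApos hsm hODE h00 hLL hLn hwit hpos using key
  set idx : Fin (2 * j) → Fin j := fun i =>
    if h : i.1 < j then ⟨i.1, h⟩ else ⟨i.1 - j, by omega⟩ with hidxdef
  set sgn : Fin (2 * j) → ℝ := fun i => if i.1 < j then 1 else -1 with hsgndef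
  have hsgn : ∀ i, sgn i = 1 ∨ sgn i = -1 := by
    intro i
    by_cases h : i.1 < j <;> simp [hsgndef, h]
  have hsgn0 : ∀ i, sgn i ≠ 0 := by
    intro i
    rcases hsgn i with h | h <;> rw [h] <;> norm_num
  refine ⟨fun i => fun x => sgn i * ψ (idx i) x, ?_, ?_, ?_⟩
  · intro i
    apply gp_isGP ℏ m lam g β L (ψ (idx i)) (sgn i) (hsgn i) (hsm (idx i)) ?_
      (h00 (idx i)) (hLL (idx i))
    intro x
    have := hODE (idx i) x
    rw [← hcdef, ← hμdef]
    linarith [this]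
  · intro i
    obtain ⟨x0, hx0, hx0v⟩ := hwit (idx i)
    refine ⟨x0, hx0, ?_⟩
    show sgn i * ψ (idx i) x0 ≠ 0
    rw [hx0v]
    exact mul_ne_zero (hsgn0 i) (hApos (idx i)).ne'
  · have claim : ∀ i i' : Fin (2 * j), (idx i).1 < (idx i').1 →
        ∃ x ∈ Set.Icc (0:ℝ) L, sgn i * ψ (idx i) x ≠ sgn i' * ψ (idx i') x := by
      intro i i' hlt
      set x : ℝ := L / (((idx i').1 + 1 : ℕ) : ℝ) with hxdef
      have hn'pos : (0:ℝ) < (((idx i').1 + 1 : ℕ) : ℝ) := by positivity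
      have hxpos : 0 < x := by positivity
      have hxleL : x ≤ L := by
        apply div_le_self hL.le
        exact_mod_cast Nat.le_add_left 1 (idx i').1
      have hxlt : x < L / (((idx i).1 + 1 : ℕ) : ℝ) := by
        apply div_lt_div_of_pos_left hL (by positivity)
        exact_mod_cast Nat.add_lt_add_right hlt 1
      have h1 : ψ (idx i') x = 0 := hLn (idx i')
      have h2 : 0 < ψ (idx i) x := hpos (idx i) x hxpos hxlt
      refine ⟨x, ⟨hxpos.le, hxleL⟩, ?_⟩
      rw [h1, mul_zero]
      exact mul_ne_zero (hsgn0 i) h2.ne'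
    intro i i' hne
    by_cases hidx : idx i = idx i'
    · -- same index, different sign
      have hsgnne : sgn i ≠ sgn i' := by
        simp only [hsgndef, hidxdef] at hidx ⊢
        by_cases h1 : i.1 < j <;> by_cases h2 : i'.1 < j <;> simp [h1, h2] at hidx ⊢
        · exact absurd (Fin.ext hidx : i = i') hne
        · norm_num
        · norm_num
        · exact absurd (Fin.ext (by omega : i.1 = i'.1)) hne
      obtain ⟨x0, hx0, hx0v⟩ := hwit (idx i)
      refine ⟨x0, hx0, ?_⟩
      show sgn i * ψ (idx i) x0 ≠ sgn i' * ψ (idx i') x0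
      rw [← hidx, hx0v]
      intro hcontra
      have hAne := (hApos (idx i)).ne'
      rcases hsgn i with h1 | h1 <;> rcases hsgn i' with h2 | h2 <;>
        rw [h1, h2] at hcontra <;> first
          | exact hsgnne (h1.trans h2.symm)
          | (apply hAne; linarith)
    · rcases lt_trichotomy (idx i).1 (idx i').1 with h | h | h
      · exact claim i i' h
      · exact absurd (Fin.ext h) hidx
      · obtain ⟨x, hx, hne2⟩ := claim i' i h
        exact ⟨x, hx, hne2.symm⟩
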